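/- The identities a² ≈ a³, a²b ≈ b²a, and abc ≈ abc² form an identity basis of the variety generated by the 5-element semigroup C_λ = ⟨x, y | x² = x³, xy = x, x²y = 0, y² = 0⟩. -/

import Mathlib

/-- Evaluation of the nonempty word `x :: w` under the substitution `φ`. -/
def evalWord {X S : Type*} [Mul S] (φ : X → S) : X → List X → S
  | x, [] => φ x
  | x, y :: l => φ x * evalWord φ y l

/-- The 5-element semigroup C_λ = ⟨x, y | x² = x³, xy = x, x²y = 0, y² = 0⟩. -/
inductive CL : Type | x | x2 | y | xy | zero

def CL.mul : CL → CL → CL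
  | .x, .x => .x2
  | .x, .x2 => .x2
  | .x, .y => .xy
  | .x2, .x => .x2
  | .x2, .x2 => .x2
  | .y, .x => .y
  | .y, .x2 => .y
  | .xy, .x => .xy
  | .xy, .x2 => .xy
  | _, _ => .zero

instance : Semigroup CL where
  mul := CL.mul
  mul_assoc := by intro a b c; cases a <;> cases b <;> cases c <;> rfl

deriving instance DecidableEq for CL

instance : Fintype CL where
  elems := {CL.x, CL.x2, CL.y, CL.xy, CL.zero}
  complete := by intro a; cases a <;> simp

namespace CLB

/-! ### A fold-left evaluation map -/

def mulL {X S : Type*} [Mul S] (ψ : X → S) : S → List X → S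
  | s, [] => s
  | s, c :: l => mulL ψ (s * ψ c) l

section Generic

variable {X S : Type*} [Semigroup S] (ψ : X → S)

@[simp] lemma mulL_nil (s : S) : mulL ψ s [] = s := rfl

@[simp] lemma mulL_cons (s : S) (c : X) (l : List X) :
    mulL ψ s (c :: l) = mulL ψ (s * ψ c) l := rfl

lemma mulL_mul (s t : S) (l : List X) : mulL ψ (s * t) l = s * mulL ψ t l := by
  induction l generalizing t with
  | nil => rfl
  | cons c l ih => rw [mulL_cons, mulL_cons, mul_assoc, ih]

lemma evalWord_eq (a : X) (u : List X) : evalWord ψ a u = mulL ψ (ψ a) u := by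
  induction u generalizing a with
  | nil => rfl
  | cons c l ih =>
    show ψ a * evalWord ψ c l = _
    rw [ih, mulL_cons, ← mulL_mul]

/-- membership in `S·S` -/
def isP (t : S) : Prop := ∃ p q : S, t = p * q

variable (E1 : ∀ p : S, p * p = p * p * p)
variable (E2 : ∀ p q : S, p * p * q = q * q * p)
variable (E3 : ∀ p q r : S, p * q * r = p * q * r * r)

variable [DecidableEq X]

lemma toList_perm_cons {s : Finset X} {a : X} (h : a ∈ s) :
    s.toList.Perm (a :: (s.erase a).toList) := by
  conv_lhs => rw [← Finset.insert_erase h]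
  exact Finset.toList_insert (Finset.notMem_erase _ _)

include E1 E2 E3

lemma dup {t : S} (ht : isP t) (c : S) : t * c = t * c * c := by
  obtain ⟨p, q, rfl⟩ := ht; exact E3 p q c

lemma swapS {t : S} (ht : isP t) (c d : S) : t * c * d = t * d * c := by
  calc t * c * d = t * c * c * d := by rw [← dup E1 E2 E3 ht c]
    _ = t * (c * c * d) := by simp only [mul_assoc]
    _ = t * (d * d * c) := by rw [E2]
    _ = t * d * d * c := by simp only [mul_assoc]
    _ = t * d * c := by rw [← dup E1 E2 E3 ht d]

lemma mulL_perm {l l' : List X} (h : l.Perm l') :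
    ∀ t : S, isP t → mulL ψ t l = mulL ψ t l' := by
  induction h with
  | nil => intro t _; rfl
  | cons c _ ih =>
    intro t ht
    rw [mulL_cons, mulL_cons]
    exact ih _ ⟨_, _, rfl⟩
  | swap c d l =>
    intro t ht
    simp only [mulL_cons]
    rw [swapS E1 E2 E3 ht]
  | trans _ _ ih1 ih2 =>
    intro t ht
    exact (ih1 t ht).trans (ih2 t ht)

lemma mulL_finset (l : List X) : ∀ t : S, isP t →
    mulL ψ t l = mulL ψ t l.toFinset.toList := by
  induction l with
  | nil => intro t _; simp
  | cons c l ih =>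
    intro t ht
    by_cases hc : c ∈ l.toFinset
    · have h1 : (c :: l).toFinset = l.toFinset := by
        rw [List.toFinset_cons, Finset.insert_eq_self.mpr hc]
      rw [h1, mulL_cons, ih _ ⟨_, _, rfl⟩]
      have hperm := toList_perm_cons hc
      rw [mulL_perm ψ E1 E2 E3 hperm _ ⟨_, _, rfl⟩, mulL_perm ψ E1 E2 E3 hperm _ ht,
        mulL_cons, mulL_cons, ← dup E1 E2 E3 ht (ψ c)]
    · rw [List.toFinset_cons, mulL_cons, ih _ ⟨_, _, rfl⟩,
        mulL_perm ψ E1 E2 E3 (Finset.toList_insert hc) _ ht, mulL_cons]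

lemma mulL_toFinset_congr {l l' : List X} (h : l.toFinset = l'.toFinset)
    (t : S) (ht : isP t) : mulL ψ t l = mulL ψ t l' := by
  rw [mulL_finset ψ E1 E2 E3 l t ht, h, ← mulL_finset ψ E1 E2 E3 l' t ht]

lemma sq_indep {s : Finset X} {a a' : X} (ha : a ∈ s) (ha' : a' ∈ s) :
    mulL ψ (ψ a * ψ a) ((s.erase a).toList)
      = mulL ψ (ψ a' * ψ a') ((s.erase a').toList) := by
  rcases eq_or_ne a a' with rfl | hne
  · rfl
  · have h1 : a' ∈ s.erase a := Finset.mem_erase.mpr ⟨hne.symm, ha'⟩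
    have h2 : a ∈ s.erase a' := Finset.mem_erase.mpr ⟨hne, ha⟩
    rw [mulL_perm ψ E1 E2 E3 (toList_perm_cons h1) _ ⟨_, _, rfl⟩,
      mulL_perm ψ E1 E2 E3 (toList_perm_cons h2) _ ⟨_, _, rfl⟩,
      mulL_cons, mulL_cons, Finset.erase_right_comm, E2 (ψ a) (ψ a')]

/-! ### Normal forms -/

lemma NFboth {a b : X} {r : List X} (hab : a ≠ b) (har : a ∉ r) (hbr : b ∉ r) :
    evalWord ψ a (b :: r) =
      mulL ψ (ψ a * ψ b)
        ((((insert a (insert b r.toFinset)).erase a).erase b).toList) := by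
  have h1 : (insert a (insert b r.toFinset)).erase a = insert b r.toFinset :=
    Finset.erase_insert (by simp [hab, har])
  have h2 : (insert b r.toFinset).erase b = r.toFinset :=
    Finset.erase_insert (by simp [hbr])
  rw [evalWord_eq, mulL_cons, mulL_finset ψ E1 E2 E3 r _ ⟨_, _, rfl⟩, h1, h2]

lemma NFsnd {a b : X} {r : List X} (hab : a ≠ b) (har : a ∈ r) (hbr : b ∉ r) :
    evalWord ψ a (b :: r) =
      mulL ψ (ψ a * ψ b) (((insert a (insert b r.toFinset)).erase b).toList) := by
  have h1 : insert a (insert b r.toFinset) = insert b r.toFinset :=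
    Finset.insert_eq_self.mpr (by simp [har])
  have h2 : (insert b r.toFinset).erase b = r.toFinset :=
    Finset.erase_insert (by simp [hbr])
  rw [evalWord_eq, mulL_cons, mulL_finset ψ E1 E2 E3 r _ ⟨_, _, rfl⟩, h1, h2]

lemma NFfst {a b : X} {r : List X} (hab : a ≠ b) (har : a ∉ r) (hbr : b ∈ r)
    {e : X} (he : e ∈ (insert a (insert b r.toFinset)).erase a) :
    evalWord ψ a (b :: r) =
      ψ a * mulL ψ (ψ e * ψ e)
        ((((insert a (insert b r.toFinset)).erase a).erase e).toList) := by
  have hsa : (insert a (insert b r.toFinset)).erase a = r.toFinset := by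
    rw [Finset.erase_insert (by simp [hab, har])]
    exact Finset.insert_eq_self.mpr (by simp [hbr])
  have hbrt : b ∈ r.toFinset := by simp [hbr]
  rw [evalWord_eq, mulL_cons, mulL_finset ψ E1 E2 E3 r _ ⟨_, _, rfl⟩,
    mulL_perm ψ E1 E2 E3 (toList_perm_cons hbrt) _ ⟨_, _, rfl⟩, mulL_cons,
    mul_assoc (ψ a) (ψ b) (ψ b), mulL_mul]
  rw [hsa]
  exact congrArg (ψ a * ·) (sq_indep ψ E1 E2 E3 hbrt (hsa ▸ he))

lemma NFnone {a b : X} {r : List X} (hcond : a = b ∨ (a ∈ r ∧ b ∈ r))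
    {e : X} (he : e ∈ insert a (insert b r.toFinset)) :
    evalWord ψ a (b :: r) =
      mulL ψ (ψ e * ψ e) (((insert a (insert b r.toFinset)).erase e).toList) := by
  suffices h : evalWord ψ a (b :: r) =
      mulL ψ (ψ a * ψ a) (((insert a (insert b r.toFinset)).erase a).toList) by
    rw [h]
    exact sq_indep ψ E1 E2 E3 (Finset.mem_insert_self a _) he
  rcases eq_or_ne a b with rfl | hab
  · have hs : insert a (insert a r.toFinset) = insert a r.toFinset :=
      Finset.insert_idem a _
    rw [evalWord_eq, mulL_cons, mulL_finset ψ E1 E2 E3 r _ ⟨_, _, rfl⟩, hs,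
      Finset.erase_insert_eq_erase]
    by_cases ha : a ∈ r.toFinset
    · rw [mulL_perm ψ E1 E2 E3 (toList_perm_cons ha) _ ⟨_, _, rfl⟩,
        mulL_cons, ← E1 (ψ a)]
    · rw [Finset.erase_eq_of_notMem ha]
  · rcases hcond with rfl | ⟨har, hbr⟩
    · exact absurd rfl hab
    · have hs : insert a (insert b r.toFinset) = r.toFinset := by
        rw [Finset.insert_eq_self.mpr (by simp [har]),
          Finset.insert_eq_self.mpr (by simp [hbr])]
      have hbrt : b ∈ r.toFinset := by simp [hbr]
      have hart : a ∈ r.toFinset.erase b :=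
        Finset.mem_erase.mpr ⟨hab, by simp [har]⟩
      rw [evalWord_eq, mulL_cons, mulL_finset ψ E1 E2 E3 r _ ⟨_, _, rfl⟩, hs]
      rw [mulL_perm ψ E1 E2 E3 (toList_perm_cons hbrt) _ ⟨_, _, rfl⟩,
        mulL_cons,
        mulL_perm ψ E1 E2 E3 (toList_perm_cons hart) _ ⟨_, _, rfl⟩,
        mulL_cons]
      have key : ψ a * ψ b * ψ b * ψ a = ψ a * ψ a * ψ b := by
        calc ψ a * ψ b * ψ b * ψ a = ψ a * (ψ b * ψ b * ψ a) := by
              simp only [mul_assoc]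
          _ = ψ a * (ψ a * ψ a * ψ b) := by rw [E2]
          _ = ψ a * ψ a * ψ a * ψ b := by simp only [mul_assoc]
          _ = ψ a * ψ a * ψ b := by rw [← E1]
      rw [key, ← mulL_cons]
      apply mulL_toFinset_congr ψ E1 E2 E3 _ _ ⟨_, _, rfl⟩
      rw [List.toFinset_cons, Finset.toList_toFinset, Finset.toList_toFinset,
        Finset.erase_right_comm, Finset.insert_erase
          (Finset.mem_erase.mpr ⟨hab.symm, hbrt⟩)]

end Generic

/-! ### Invariants -/

inductive Hd (X : Type*) where
  | hnone : Hd X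
  | hfst (a : X) : Hd X
  | hboth (a b : X) : Hd X
  | hsnd (a b : X) : Hd X

inductive Inv (X : Type*) where
  | single (a : X) : Inv X
  | word (s : Finset X) (h : Hd X) : Inv X

section Inv

variable {X : Type*} [DecidableEq X]

def hd (a b : X) (r : List X) : Hd X :=
  if a = b then .hnone
  else if a ∈ r then (if b ∈ r then .hnone else .hsnd a b)
  else if b ∈ r then .hfst a else .hboth a b

def inv (a : X) : List X → Inv X
  | [] => .single a
  | b :: r => .word (insert a (insert b r.toFinset)) (hd a b r)

lemma hd_hnone {a b : X} {r : List X} (h : hd a b r = .hnone) :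
    a = b ∨ (a ∈ r ∧ b ∈ r) := by
  unfold hd at h
  split_ifs at h with h1 h2 h3 h4
  · exact Or.inl h1
  · exact Or.inr ⟨h2, h3⟩

lemma hd_hfst {a b : X} {r : List X} {a' : X} (h : hd a b r = .hfst a') :
    a' = a ∧ a ≠ b ∧ a ∉ r ∧ b ∈ r := by
  unfold hd at h
  split_ifs at h with h1 h2 h3 h4
  injection h with h5
  exact ⟨h5.symm, h1, h2, h4⟩

lemma hd_hboth {a b : X} {r : List X} {a' b' : X} (h : hd a b r = .hboth a' b') :
    a' = a ∧ b' = b ∧ a ≠ b ∧ a ∉ r ∧ b ∉ r := by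
  unfold hd at h
  split_ifs at h with h1 h2 h3 h4
  injection h with h5 h6
  exact ⟨h5.symm, h6.symm, h1, h2, h4⟩

lemma hd_hsnd {a b : X} {r : List X} {a' b' : X} (h : hd a b r = .hsnd a' b') :
    a' = a ∧ b' = b ∧ a ≠ b ∧ a ∈ r ∧ b ∉ r := by
  unfold hd at h
  split_ifs at h with h1 h2 h3 h4
  injection h with h5 h6
  exact ⟨h5.symm, h6.symm, h1, h2, h3⟩

end Inv

/-! ### Soundness -/

section Sound

variable {X S : Type*} [Semigroup S] [DecidableEq X] (ψ : X → S)
variable (E1 : ∀ p : S, p * p = p * p * p)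
variable (E2 : ∀ p q : S, p * p * q = q * q * p)
variable (E3 : ∀ p q r : S, p * q * r = p * q * r * r)

include E1 E2 E3

theorem sound {a b : X} {u v : List X} (h : inv a u = inv b v) :
    evalWord ψ a u = evalWord ψ b v := by
  match u, v with
  | [], [] =>
    have : a = b := by
      simpa [inv, Inv.single.injEq] using h
    rw [this]
  | [], c :: r => simp [inv] at h
  | c :: r, [] => simp [inv] at h
  | a2 :: r1, b2 :: r2 =>
    simp only [inv, Inv.word.injEq] at h
    obtain ⟨hs, hh⟩ := h
    cases hE : hd a a2 r1 with
    | hnone =>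
      rw [hE] at hh
      have c1 := hd_hnone hE
      have c2 := hd_hnone hh.symm
      rw [NFnone ψ E1 E2 E3 c1 (Finset.mem_insert_self a _),
        NFnone ψ E1 E2 E3 c2 (e := a) (by rw [← hs]; exact Finset.mem_insert_self a _),
        hs]
    | hfst a' =>
      rw [hE] at hh
      obtain ⟨ha1, hab1, h1, h2⟩ := hd_hfst hE
      obtain ⟨hb1, hab2, h3, h4⟩ := hd_hfst hh.symm
      have hba : b = a := by rw [← hb1, ha1]
      subst hba
      have he1 : a2 ∈ (insert b (insert a2 r1.toFinset)).erase b :=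
        Finset.mem_erase.mpr ⟨fun hq => hab1 hq.symm, by simp⟩
      rw [NFfst ψ E1 E2 E3 hab1 h1 h2 he1,
        NFfst ψ E1 E2 E3 hab2 h3 h4 (e := a2) (by rw [← hs]; exact he1), hs]
    | hboth a' b' =>
      rw [hE] at hh
      obtain ⟨ha1, hb1, hab1, h1, h2⟩ := hd_hboth hE
      obtain ⟨ha2, hb2, hab2, h3, h4⟩ := hd_hboth hh.symm
      have hba : b = a := by rw [← ha2, ha1]
      have hq : b2 = a2 := by rw [← hb2, hb1]
      subst hba; subst hq
      rw [NFboth ψ E1 E2 E3 hab1 h1 h2, NFboth ψ E1 E2 E3 hab2 h3 h4, hs]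
    | hsnd a' b' =>
      rw [hE] at hh
      obtain ⟨ha1, hb1, hab1, h1, h2⟩ := hd_hsnd hE
      obtain ⟨ha2, hb2, hab2, h3, h4⟩ := hd_hsnd hh.symm
      have hba : b = a := by rw [← ha2, ha1]
      have hq : b2 = a2 := by rw [← hb2, hb1]
      subst hba; subst hq
      rw [NFsnd ψ E1 E2 E3 hab1 h1 h2, NFsnd ψ E1 E2 E3 hab2 h3 h4, hs]

end Sound

/-! ### Completeness: separating substitutions into CL -/

section Complete

variable {X : Type*} [DecidableEq X]

def phiB (c : X) : X → CL := fun t => if t = c then CL.y else CL.x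

def phiC (a b : X) : X → CL := fun t =>
  if t = a then CL.x else if t = b then CL.y else CL.x2

def expB (c : X) : Inv X → CL
  | .single a => if a = c then .y else .x
  | .word s h =>
    if c ∈ s then
      match h with
      | .hnone => .zero
      | .hfst a => if a = c then .y else .zero
      | .hboth a b => if a = c then .y else if b = c then .xy else .zero
      | .hsnd a b => if b = c then .xy else .zero
    else .x2

lemma mulL_stable {z : CL} (φ : X → CL) {l : List X}
    (h : ∀ c ∈ l, z * φ c = z) : mulL φ z l = z := by
  induction l with
  | nil => rfl
  | cons d l ih =>
    rw [mulL_cons, h d List.mem_cons_self]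
    exact ih fun c hc => h c (List.mem_cons_of_mem _ hc)

lemma mulL_zeroCL (φ : X → CL) (l : List X) : mulL φ CL.zero l = CL.zero :=
  mulL_stable φ fun c _ => by cases φ c <;> rfl

lemma B_hit {c : X} {l : List X} {z : CL}
    (hzx : z * CL.x = z) (hzy : z * CL.y = CL.zero) (hc : c ∈ l) :
    mulL (phiB c) z l = CL.zero := by
  induction l with
  | nil => cases hc
  | cons d l ih =>
    by_cases hd : d = c
    · rw [mulL_cons, show phiB c d = CL.y by simp [phiB, hd], hzy, mulL_zeroCL]
    · rw [mulL_cons, show phiB c d = CL.x by simp [phiB, hd], hzx]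
      exact ih (by rcases List.mem_cons.mp hc with h | h
                   · exact absurd h.symm hd
                   · exact h)

lemma B_miss {c : X} {l : List X} {z : CL}
    (hzx : z * CL.x = z) (hc : c ∉ l) : mulL (phiB c) z l = z :=
  mulL_stable _ fun d hdl => by
    have : d ≠ c := fun h => hc (h ▸ hdl)
    rw [show phiB c d = CL.x by simp [phiB, this], hzx]

lemma evB (c a : X) (u : List X) :
    evalWord (phiB c) a u = expB c (inv a u) := by
  cases u with
  | nil => rfl
  | cons b r =>
    rw [evalWord_eq, mulL_cons]
    by_cases hac : a = c
    · by_cases hbc : b = c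
      · rw [show phiB c a * phiB c b = CL.zero by simp [phiB, hac, hbc]; rfl,
          mulL_zeroCL]
        simp only [inv, expB, hd]
        split_ifs <;> simp_all <;> simp_all [eq_comm]
      · by_cases hcr : c ∈ r
        · rw [show phiB c a * phiB c b = CL.y by simp [phiB, hac, hbc]; rfl,
            B_hit (z := CL.y) rfl rfl hcr]
          simp only [inv, expB, hd]
          split_ifs <;> simp_all <;> simp_all [eq_comm]
        · rw [show phiB c a * phiB c b = CL.y by simp [phiB, hac, hbc]; rfl,
            B_miss (z := CL.y) rfl hcr]
          simp only [inv, expB, hd]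
          split_ifs <;> simp_all <;> simp_all [eq_comm]
    · by_cases hbc : b = c
      · by_cases hcr : c ∈ r
        · rw [show phiB c a * phiB c b = CL.xy by simp [phiB, hac, hbc]; rfl,
            B_hit (z := CL.xy) rfl rfl hcr]
          simp only [inv, expB, hd]
          split_ifs <;> simp_all <;> simp_all [eq_comm]
        · rw [show phiB c a * phiB c b = CL.xy by simp [phiB, hac, hbc]; rfl,
            B_miss (z := CL.xy) rfl hcr]
          simp only [inv, expB, hd]
          split_ifs <;> simp_all <;> simp_all [eq_comm]
      · by_cases hcr : c ∈ r
        · rw [show phiB c a * phiB c b = CL.x2 by simp [phiB, hac, hbc]; rfl,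
            B_hit (z := CL.x2) rfl rfl hcr]
          simp only [inv, expB, hd]
          split_ifs <;> simp_all <;> simp_all [eq_comm]
        · rw [show phiB c a * phiB c b = CL.x2 by simp [phiB, hac, hbc]; rfl,
            B_miss (z := CL.x2) rfl hcr]
          simp only [inv, expB, hd]
          split_ifs <;> simp_all <;> simp_all [eq_comm]

lemma expB_x2_iff {c : X} {s : Finset X} {H : Hd X} :
    expB c (.word s H) = CL.x2 ↔ c ∉ s := by
  cases H <;> by_cases hc : c ∈ s <;>
    simp [expB, hc] <;> split_ifs <;> simp_all

def WF (s : Finset X) : Hd X → Prop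
  | .hnone => True
  | .hfst a => a ∈ s
  | .hboth a b => a ∈ s ∧ b ∈ s ∧ a ≠ b
  | .hsnd a b => a ∈ s ∧ b ∈ s ∧ a ≠ b

lemma wf_hd (a b : X) (r : List X) :
    WF (insert a (insert b r.toFinset)) (hd a b r) := by
  unfold hd
  split_ifs with h1 h2 h3 h4 <;> simp [WF, h1] <;> try simp_all

lemma head_det {s : Finset X} {H₁ H₂ : Hd X} (w1 : WF s H₁) (w2 : WF s H₂)
    (hB : ∀ c, expB c (.word s H₁) = expB c (.word s H₂)) :
    H₁ = H₂ ∨ ∃ p p' q, p ≠ p' ∧ H₁ = .hsnd p q ∧ H₂ = .hsnd p' q := by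
  cases H₁ with
  | hnone =>
    cases H₂ with
    | hnone => exact Or.inl rfl
    | hfst a =>
      have ha : a ∈ s := w2
      have h := hB a; simp [expB, ha] at h
    | hboth a b =>
      have ha : a ∈ s := w2.1
      have h := hB a; simp [expB, ha] at h
    | hsnd a b =>
      have hb : b ∈ s := w2.2.1
      have h := hB b; simp [expB, hb] at h
  | hfst a =>
    have ha : a ∈ s := w1
    cases H₂ with
    | hnone => have h := hB a; simp [expB, ha] at h
    | hfst a' =>
      have h := hB a; simp [expB, ha] at h
      have h1 := h
      exact Or.inl (by rw [h1])
    | hboth a' b' =>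
      have hb' : b' ∈ s := w2.2.1
      have hne : a' ≠ b' := w2.2.2
      have h := hB b'; simp [expB, hb', hne] at h
      split_ifs at h <;> simp_all
    | hsnd a' b' =>
      have h := hB a; simp [expB, ha] at h
      split_ifs at h <;> simp_all
  | hboth a b =>
    have ha : a ∈ s := w1.1
    have hb : b ∈ s := w1.2.1
    have hab : a ≠ b := w1.2.2
    cases H₂ with
    | hnone =>
      have h := hB a; simp [expB, ha] at h
    | hfst a' =>
      have h := hB b; simp [expB, hb, hab] at h
      split_ifs at h <;> simp_all
    | hboth a' b' =>
      have h1 := hB a; simp [expB, ha] at h1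
      have h2 := hB b; simp [expB, hb, hab] at h2
      by_cases e1 : a' = a
      · by_cases e2 : b' = b
        · exact Or.inl (by rw [e1, e2])
        · simp [e1, hab, e2] at h2
      · simp [e1] at h1
        split_ifs at h1 <;> simp_all
    | hsnd a' b' =>
      have h := hB a; simp [expB, ha] at h
      split_ifs at h <;> simp_all
  | hsnd a b =>
    have ha : a ∈ s := w1.1
    have hb : b ∈ s := w1.2.1
    have hab : a ≠ b := w1.2.2
    cases H₂ with
    | hnone =>
      have h := hB b; simp [expB, hb] at h
    | hfst a' =>
      have ha' : a' ∈ s := w2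
      have h := hB a'; simp [expB, ha'] at h
      split_ifs at h <;> simp_all
    | hboth a' b' =>
      have ha' : a' ∈ s := w2.1
      have h := hB a'; simp [expB, ha'] at h
      split_ifs at h <;> simp_all
    | hsnd a' b' =>
      have h := hB b; simp [expB, hb] at h
      have e1 := h
      by_cases e2 : a' = a
      · exact Or.inl (by rw [e1, e2])
      · exact Or.inr ⟨a, a', b, fun hh => e2 hh.symm, rfl, by rw [e1]⟩

lemma evalA_nil (a : X) : evalWord (fun _ : X => CL.x) a [] = CL.x := rfl

lemma evalA_cons (a b : X) (r : List X) :
    evalWord (fun _ : X => CL.x) a (b :: r) = CL.x2 := by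
  rw [evalWord_eq, mulL_cons]
  exact mulL_stable _ (fun c _ => rfl)

lemma evC1 {a b : X} (hab : a ≠ b) {r : List X} (hbr : b ∉ r) :
    evalWord (phiC a b) a (b :: r) = CL.xy := by
  have hba : ¬b = a := fun h => hab h.symm
  rw [evalWord_eq, mulL_cons,
    show phiC a b a * phiC a b b = CL.xy by
      simp [phiC, hba]; rfl]
  exact mulL_stable _ (fun c hc => by
    by_cases hca : c = a
    · rw [show phiC a b c = CL.x by simp [phiC, hca]]; rfl
    · have hcb : ¬c = b := fun h => hbr (h ▸ hc)
      rw [show phiC a b c = CL.x2 by simp [phiC, hca, hcb]]; rfl)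

lemma evC2 {a b f : X} (hfa : ¬f = a) (hfb : ¬f = b) (hba : ¬b = a)
    (r : List X) : evalWord (phiC a b) f (b :: r) = CL.zero := by
  rw [evalWord_eq, mulL_cons,
    show phiC a b f * phiC a b b = CL.zero by
      simp [phiC, hfa, hfb, hba]; rfl,
    mulL_zeroCL]

theorem sep {a b : X} {u v : List X}
    (hCL : ∀ φ : X → CL, evalWord φ a u = evalWord φ b v) :
    inv a u = inv b v := by
  match u, v with
  | [], [] =>
    rcases eq_or_ne a b with rfl | hne
    · rfl
    · have h := hCL (fun t => if t = a then CL.x else CL.y)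
      have h' : (if a = a then CL.x else CL.y) = (if b = a then CL.x else CL.y) := h
      rw [if_pos rfl, if_neg (fun h'' => hne h''.symm)] at h'
      exact absurd h' (by decide)
  | [], b2 :: r2 =>
    have h := hCL (fun _ => CL.x)
    rw [show evalWord (fun _ : X => CL.x) a [] = CL.x from rfl, evalA_cons] at h
    exact absurd h (by decide)
  | a2 :: r1, [] =>
    have h := hCL (fun _ => CL.x)
    rw [show evalWord (fun _ : X => CL.x) b [] = CL.x from rfl, evalA_cons] at h
    exact absurd h (by decide)
  | a2 :: r1, b2 :: r2 =>
    have hBw : ∀ c, expB c (.word (insert a (insert a2 r1.toFinset)) (hd a a2 r1))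
        = expB c (.word (insert b (insert b2 r2.toFinset)) (hd b b2 r2)) :=
      fun c => by rw [show (Inv.word (insert a (insert a2 r1.toFinset)) (hd a a2 r1)) = inv a (a2 :: r1) from rfl,
        show (Inv.word (insert b (insert b2 r2.toFinset)) (hd b b2 r2)) = inv b (b2 :: r2) from rfl,
        ← evB, ← evB]; exact hCL _
    have hs : insert a (insert a2 r1.toFinset) = insert b (insert b2 r2.toFinset) := by
      ext c
      have h : (expB c (Inv.word (insert a (insert a2 r1.toFinset)) (hd a a2 r1)) = CL.x2)
          ↔ (expB c (Inv.word (insert b (insert b2 r2.toFinset)) (hd b b2 r2)) = CL.x2) := by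
        rw [hBw c]
      rw [expB_x2_iff, expB_x2_iff] at h
      exact not_iff_not.mp h
    have hw1 := wf_hd a a2 r1
    have hw2 := wf_hd b b2 r2
    rw [← hs] at hw2
    have hBw' : ∀ c, expB c (.word (insert a (insert a2 r1.toFinset)) (hd a a2 r1))
        = expB c (.word (insert a (insert a2 r1.toFinset)) (hd b b2 r2)) := by
      intro c; rw [hBw c, hs]
    rcases head_det hw1 hw2 hBw' with he | ⟨p, p', q, hpp, hh1, hh2⟩
    · show Inv.word _ _ = Inv.word _ _
      rw [hs, he]
    · obtain ⟨hp1, hq1, hne1, har1, hbr1⟩ := hd_hsnd hh1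
      obtain ⟨hp2, hq2, hne2, har2, hbr2⟩ := hd_hsnd hh2
      have hq : b2 = a2 := hq2.symm.trans hq1
      have h := hCL (phiC a a2)
      rw [evC1 hne1 hbr1, hq] at h
      have hba : b ≠ a := fun hh => hpp (by rw [hp1, hp2, hh])
      have hba2 : b ≠ a2 := by rw [← hq]; exact hne2
      rw [evC2 hba hba2 (fun hh => hne1 hh.symm)] at h
      exact absurd h (by decide)

end Complete

end CLB

/-- The identities a² ≈ a³, a²b ≈ b²a and abc ≈ abc² form an identity basis of the
variety generated by C_λ: they hold in C_λ, and every identity holding in C_λ holds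
in every semigroup satisfying these three identities. -/
theorem CL_identity_basis :
    ((∀ p : CL, p * p = p * p * p) ∧
      (∀ p q : CL, p * p * q = q * q * p) ∧
      (∀ p q r : CL, p * q * r = p * q * r * r)) ∧
    (∀ (X : Type) (a b : X) (u v : List X),
      (∀ φ : X → CL, evalWord φ a u = evalWord φ b v) →
      ∀ (S : Type) [Semigroup S],
        (∀ p : S, p * p = p * p * p) →
        (∀ p q : S, p * p * q = q * q * p) →
        (∀ p q r : S, p * q * r = p * q * r * r) →
        ∀ ψ : X → S, evalWord ψ a u = evalWord ψ b v) := by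
  refine ⟨⟨by decide, by decide, by decide⟩, ?_⟩
  intro X a b u v hCL S _inst g1 g2 g3 ψ
  letI : DecidableEq X := Classical.decEq X
  exact CLB.sound ψ g1 g2 g3 (CLB.sep hCL)
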